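/- Let f : (0,∞) → ℝ be differentiable, let y ∈ ℝ², and let x ∈ ℝ² with x ≠ y. Then the traction at x of the matrix field z ↦ f(|z−y|) I equals (f'(|x−y|)/|x−y|) · U_1(x,y). -/

import Mathlib

open Real Filter MeasureTheory

/-- Euclidean norm on ℝ² (represented as `Fin 2 → ℝ`). -/
noncomputable def nrm2 (z : Fin 2 → ℝ) : ℝ := Real.sqrt (z 0 ^ 2 + z 1 ^ 2)

/-- Euclidean inner product on ℝ². -/
noncomputable def dot2 (a b : Fin 2 → ℝ) : ℝ := a 0 * b 0 + a 1 * b 1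

/-- identity matrix entries -/
noncomputable def idm (i j : Fin 2) : ℝ := if i = j then 1 else 0

/-- J(z) = z zᵀ / |z|² -/
noncomputable def Jmat (z : Fin 2 → ℝ) (i j : Fin 2) : ℝ := z i * z j / nrm2 z ^ 2

/-- divergence of a planar vector field -/
noncomputable def divg (v : (Fin 2 → ℝ) → (Fin 2 → ℝ)) (x : Fin 2 → ℝ) : ℝ :=
  fderiv ℝ v x (Pi.single 0 1) 0 + fderiv ℝ v x (Pi.single 1 1) 1

/-- traction operator T on a planar vector field:
(Tv)(x) = λ (div v)(x) ν + 2μ ((ν·∇)v)(x) + μ (div(Qv))(x) Qν, where Q = [[0,1],[-1,0]]. -/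
noncomputable def traction (lam mu : ℝ) (ν : Fin 2 → ℝ)
    (v : (Fin 2 → ℝ) → (Fin 2 → ℝ)) (x : Fin 2 → ℝ) : Fin 2 → ℝ :=
  (lam * divg v x) • ν + (2 * mu) • fderiv ℝ v x ν
    + (mu * divg (fun y => ![v y 1, -(v y 0)]) x) • ![ν 1, -(ν 0)]

/-- traction of a 2×2 matrix-valued field, acting columnwise -/
noncomputable def tractionM (lam mu : ℝ) (ν : Fin 2 → ℝ)
    (G : (Fin 2 → ℝ) → Fin 2 → Fin 2 → ℝ) (x : Fin 2 → ℝ) (i j : Fin 2) : ℝ :=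
  traction lam mu ν (fun y i' => G y i' j) x i

/-- U₁(x,y) = λ ν (x−y)ᵀ + μ (x−y) νᵀ + μ (ν·(x−y)) I -/
noncomputable def U1mat (lam mu : ℝ) (ν x y : Fin 2 → ℝ) (i j : Fin 2) : ℝ :=
  lam * ν i * (x j - y j) + mu * (x i - y i) * ν j + mu * dot2 ν (x - y) * idm i j

/-- U₂(x,y) = (λ+2μ) ν (x−y)ᵀ + μ (x−y) νᵀ + μ (ν·(x−y)) (I − 4J(x−y)) -/
noncomputable def U2mat (lam mu : ℝ) (ν x y : Fin 2 → ℝ) (i j : Fin 2) : ℝ :=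
  (lam + 2 * mu) * ν i * (x j - y j) + mu * (x i - y i) * ν j
    + mu * dot2 ν (x - y) * (idm i j - 4 * Jmat (x - y) i j)

/-- Laguerre polynomial L_n(x) = ∑_{k=0}^n (−1)^k (n choose k) x^k / k! -/
noncomputable def lagPoly (n : ℕ) (x : ℝ) : ℝ :=
  ∑ k ∈ Finset.range (n + 1), (-1 : ℝ) ^ k * (n.choose k : ℝ) * x ^ k / (k.factorial : ℝ)

noncomputable def dlin (a : Fin 2 → ℝ) : (Fin 2 → ℝ) →L[ℝ] ℝ :=
  a 0 • ContinuousLinearMap.proj 0 + a 1 • ContinuousLinearMap.proj 1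

lemma dlin_apply (a h : Fin 2 → ℝ) : dlin a h = a 0 * h 0 + a 1 * h 1 := rfl

lemma nrm2_pos {x y : Fin 2 → ℝ} (hxy : x ≠ y) : 0 < nrm2 (x - y) := by
  have h : (x - y) 0 ^ 2 + (x - y) 1 ^ 2 > 0 := by
    rcases Classical.em (x 0 = y 0) with h0 | h0
    · have h1 : x 1 ≠ y 1 := by
        intro h1; apply hxy; funext i; fin_cases i <;> assumption
      have : (x - y) 1 ≠ 0 := by simpa [sub_eq_zero] using h1
      positivity
    · have : (x - y) 0 ≠ 0 := by simpa [sub_eq_zero] using h0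
      positivity
  exact Real.sqrt_pos.mpr h

lemma radial_fderiv (f f' : ℝ → ℝ) (y x : Fin 2 → ℝ)
    (hf : ∀ r : ℝ, 0 < r → HasDerivAt f (f' r) r) (hxy : x ≠ y) :
    HasFDerivAt (fun z => f (nrm2 (z - y)))
      ((f' (nrm2 (x - y)) / nrm2 (x - y)) • dlin (x - y)) x := by
  set r := nrm2 (x - y) with hr
  have hrpos : 0 < r := nrm2_pos hxy
  have h0 : HasFDerivAt (fun z : Fin 2 → ℝ => z 0 - y 0)
      (ContinuousLinearMap.proj 0 : (Fin 2 → ℝ) →L[ℝ] ℝ) x :=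
    HasFDerivAt.sub_const (y 0) (hasFDerivAt_apply 0 x)
  have h1 : HasFDerivAt (fun z : Fin 2 → ℝ => z 1 - y 1)
      (ContinuousLinearMap.proj 1 : (Fin 2 → ℝ) →L[ℝ] ℝ) x :=
    HasFDerivAt.sub_const (y 1) (hasFDerivAt_apply 1 x)
  have hu : HasFDerivAt (fun z : Fin 2 → ℝ => (z 0 - y 0) ^ 2 + (z 1 - y 1) ^ 2)
      (dlin (2 • (x - y))) x := by
    have h := (h0.mul h0).add (h1.mul h1)
    refine HasFDerivAt.congr_fderiv (h.congr_of_eventuallyEq (Filter.Eventually.of_forall fun z => ?_)) ?_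
    · simp; ring
    · ext h'
      simp [dlin]
      ring
  have hux : (x 0 - y 0) ^ 2 + (x 1 - y 1) ^ 2 = r ^ 2 := by
    rw [hr, nrm2, Real.sq_sqrt (by positivity)]
    simp
  have husq : ((x 0 - y 0) ^ 2 + (x 1 - y 1) ^ 2) ≠ 0 := by
    rw [hux]; positivity
  have hnx : Real.sqrt ((x 0 - y 0) ^ 2 + (x 1 - y 1) ^ 2) = r := by
    rw [hux, Real.sqrt_sq hrpos.le]
  have hn : HasFDerivAt (fun z => nrm2 (z - y))
      ((1 / (2 * r)) • dlin (2 • (x - y))) x := by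
    have hsqrt := (Real.hasDerivAt_sqrt husq).comp_hasFDerivAt x hu
    rw [hnx] at hsqrt
    exact hsqrt
  have hcomp := (hf r hrpos).comp_hasFDerivAt x hn
  refine hcomp.congr_fderiv ?_
  ext h
  simp [dlin]
  field_simp

lemma col_fderiv (g : (Fin 2 → ℝ) → ℝ) (D : (Fin 2 → ℝ) →L[ℝ] ℝ) (x : Fin 2 → ℝ)
    (hg : HasFDerivAt g D x) (c : Fin 2 → ℝ) :
    HasFDerivAt (fun z i' => g z * c i')
      (ContinuousLinearMap.pi fun i' => c i' • D) x := by
  rw [hasFDerivAt_pi']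
  intro i
  have h := hg.mul_const (c i)
  exact h

/-- The traction of the matrix field z ↦ f(|z−y|) I equals (f'(|x−y|)/|x−y|) U₁(x,y). -/
theorem traction_radial_scalar_times_id (lam mu : ℝ) (ν : Fin 2 → ℝ) (f f' : ℝ → ℝ)
    (hf : ∀ r : ℝ, 0 < r → HasDerivAt f (f' r) r)
    (y x : Fin 2 → ℝ) (hxy : x ≠ y) :
    ∀ i j : Fin 2,
      tractionM lam mu ν (fun z i' j' => f (nrm2 (z - y)) * idm i' j') x i j
        = f' (nrm2 (x - y)) / nrm2 (x - y) * U1mat lam mu ν x y i j := by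
  intro i j
  have hg := radial_fderiv f f' y x hf hxy
  set D := (f' (nrm2 (x - y)) / nrm2 (x - y)) • dlin (x - y) with hD
  have hv : HasFDerivAt (fun z i' => f (nrm2 (z - y)) * idm i' j)
      (ContinuousLinearMap.pi fun i' => idm i' j • D) x :=
    col_fderiv _ D x hg _
  have hw : (fun z => ![f (nrm2 (z - y)) * idm 1 j, -(f (nrm2 (z - y)) * idm 0 j)])
      = fun z i' => f (nrm2 (z - y)) * (![idm 1 j, -(idm 0 j)]) i' := by
    funext z i'
    fin_cases i' <;> simp
  have hv2 : HasFDerivAt (fun z i' => f (nrm2 (z - y)) * (![idm 1 j, -(idm 0 j)]) i')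
      (ContinuousLinearMap.pi fun i' => (![idm 1 j, -(idm 0 j)]) i' • D) x :=
    col_fderiv _ D x hg _
  simp only [tractionM, traction, divg]
  rw [hw, hv.fderiv, hv2.fderiv]
  simp only [ContinuousLinearMap.pi_apply, ContinuousLinearMap.smul_apply, hD,
    dlin_apply, Pi.sub_apply, Pi.single_apply, smul_eq_mul, Pi.add_apply, Pi.smul_apply,
    U1mat, dot2]
  fin_cases i <;> fin_cases j <;>
    simp [idm, Matrix.cons_val_zero, Matrix.cons_val_one, Matrix.head_cons] <;> ring
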